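/- arXiv:2104.08933 — 9 statements merged into one kernel-verified Lean document; each statement's English description precedes it below -/
import Mathlib

section
/- If a connected simple graph G has diameter at least 3, then for every integer s ≥ 1 the complement of the jet graph J_s(G) contains an induced cycle of length 4; in particular J_s(G) is not co-chordal. -/
/-- The jet graph of order `s` of a simple graph `G`: vertices are pairs `(v, i)`
with `i ∈ {0,…,s}`, and `(a,i)` is adjacent to `(b,j)` iff `G.Adj a b` and `i + j ≤ s`. -/
def jetGraph {V : Type*} (G : SimpleGraph V) (s : ℕ) : SimpleGraph (V × Fin (s + 1)) where
  Adj p q := G.Adj p.1 q.1 ∧ p.2.val + q.2.val ≤ s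
  symm := by
    constructor
    intro p q h
    exact ⟨h.1.symm, by omega⟩
  loopless := by
    constructor
    intro p h
    exact G.irrefl h.1

/-- `a b c d` form an induced 4-cycle in `H` (in this cyclic order). -/
def IsInducedCycle4 {W : Type*} (H : SimpleGraph W) (a b c d : W) : Prop :=
  a ≠ b ∧ a ≠ c ∧ a ≠ d ∧ b ≠ c ∧ b ≠ d ∧ c ≠ d ∧
  H.Adj a b ∧ H.Adj b c ∧ H.Adj c d ∧ H.Adj d a ∧ ¬ H.Adj a c ∧ ¬ H.Adj b d

/-- A graph is chordal if it has no induced cycle of length at least 4. -/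
def IsChordal {W : Type*} (H : SimpleGraph W) : Prop :=
  ∀ n : ℕ, 4 ≤ n → ¬ ∃ f : ZMod n → W, Function.Injective f ∧
    ∀ i j : ZMod n, H.Adj (f i) (f j) ↔ (j = i + 1 ∨ i = j + 1)

/-- From an induced 4-cycle we get a non-chordality witness. -/
lemma not_chordal_of_cycle4 {W : Type*} (H : SimpleGraph W) (a b c d : W)
    (h : IsInducedCycle4 H a b c d) : ¬ IsChordal H := by
  obtain ⟨hab, hac, had, hbc, hbd, hcd, eab, ebc, ecd, eda, nac, nbd⟩ := h
  intro hch
  apply hch 4 le_rfl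
  have hcases : ∀ i : ZMod 4, i = 0 ∨ i = 1 ∨ i = 2 ∨ i = 3 := by decide
  refine ⟨fun i => if i = 0 then a else if i = 1 then b else if i = 2 then c else d, ?_, ?_⟩
  · intro i j hij
    rcases hcases i with rfl | rfl | rfl | rfl <;>
      rcases hcases j with rfl | rfl | rfl | rfl <;>
      simp only [if_pos, if_neg, reduceIte] at hij <;>
      first
        | rfl
        | exact absurd hij (by assumption)
        | exact absurd hij.symm (by assumption)
  · intro i j
    rcases hcases i with rfl | rfl | rfl | rfl <;>
      rcases hcases j with rfl | rfl | rfl | rfl <;>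
      simp only [if_pos, if_neg, reduceIte] <;>
      constructor <;> intro h <;>
      first
        | decide
        | assumption
        | exact eab.symm
        | exact ebc.symm
        | exact ecd.symm
        | exact eda.symm
        | exact absurd h (by decide)
        | exact (H.irrefl h).elim
        | exact (nac h).elim
        | exact (nbd h).elim
        | exact (nac h.symm).elim
        | exact (nbd h.symm).elim

theorem jetGraph_not_cochordal_of_diam_ge_three {V : Type*} (G : SimpleGraph V)
    (hG : G.Connected) (hdiam : 3 ≤ G.diam) :
    ∀ s : ℕ, 1 ≤ s →
      (∃ a b c d : V × Fin (s + 1), IsInducedCycle4 ((jetGraph G s)ᶜ) a b c d) ∧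
      ¬ IsChordal ((jetGraph G s)ᶜ) := by
  intro s hs
  have : Nonempty V := hG.nonempty
  obtain ⟨u, v, huv⟩ := SimpleGraph.exists_dist_eq_diam (G := G)
  have hd : 3 ≤ G.dist u v := huv ▸ hdiam
  -- neighbor of u
  obtain ⟨p, hp⟩ := hG.exists_walk_length_eq_dist u v
  have hlen : 0 < p.length := by omega
  have hux1 : G.Adj u (p.getVert 1) := by
    have := p.adj_getVert_succ (i := 0) hlen
    rwa [p.getVert_zero] at this
  set x1 := p.getVert 1 with hx1
  -- neighbor of v
  obtain ⟨q, hq⟩ := hG.exists_walk_length_eq_dist v u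
  have hqlen : 0 < q.length := by rw [hq, SimpleGraph.dist_comm]; omega
  have hvx2 : G.Adj v (q.getVert 1) := by
    have := q.adj_getVert_succ (i := 0) hqlen
    rwa [q.getVert_zero] at this
  set x2 := q.getVert 1 with hx2
  -- distance facts
  have adj_dist : ∀ {x y : V}, G.Adj x y → G.dist x y ≤ 1 := fun h =>
    le_trans (SimpleGraph.dist_le h.toWalk) (by simp)
  have huv' : ¬ G.Adj u v := fun h => by have := adj_dist h; omega
  have hvx1 : ¬ G.Adj v x1 := fun h => by
    have h1 := hG.dist_triangle (u := u) (v := x1) (w := v)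
    have h2 := adj_dist hux1
    have h3 := adj_dist h.symm
    omega
  have hux2 : ¬ G.Adj u x2 := fun h => by
    have h1 := hG.dist_triangle (u := u) (v := x2) (w := v)
    have h2 := adj_dist h
    have h3 := adj_dist hvx2.symm
    omega
  have hne_uv : u ≠ v := fun h => by
    subst h; rw [SimpleGraph.dist_self] at hd; omega
  have hx12 : x1 ≠ x2 := fun h => by
    apply hux2
    rw [← h]; exact hux1
  -- the four vertices
  set z0 : Fin (s + 1) := ⟨0, by omega⟩ with hz0
  set zs : Fin (s + 1) := ⟨s, by omega⟩ with hzs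
  have key : IsInducedCycle4 ((jetGraph G s)ᶜ) (u, z0) (v, z0) (x1, zs) (x2, zs) := by
    have hs0 : (z0 : Fin (s+1)) ≠ zs := by
      simp only [hz0, hzs, Fin.mk.injEq, ne_eq]; omega
    refine ⟨?_, ?_, ?_, ?_, ?_, ?_, ?_, ?_, ?_, ?_, ?_, ?_⟩
    · simp [Prod.ext_iff, hne_uv]
    · simp [Prod.ext_iff, hs0]
    · simp [Prod.ext_iff, hs0]
    · simp [Prod.ext_iff, hs0]
    · simp [Prod.ext_iff, hs0]
    · simp [Prod.ext_iff, hx12]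
    · rw [SimpleGraph.compl_adj]
      refine ⟨by simp [Prod.ext_iff, hne_uv], ?_⟩
      exact fun h => huv' h.1
    · rw [SimpleGraph.compl_adj]
      refine ⟨by simp [Prod.ext_iff, hs0], ?_⟩
      exact fun h => hvx1 h.1
    · rw [SimpleGraph.compl_adj]
      refine ⟨by simp [Prod.ext_iff, hx12], ?_⟩
      intro h
      have h2 := h.2
      simp only [hzs] at h2
      omega
    · rw [SimpleGraph.compl_adj]
      refine ⟨by simp [Prod.ext_iff, hs0.symm], ?_⟩
      exact fun h => hux2 h.1.symm
    · rw [SimpleGraph.compl_adj]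
      push_neg
      intro _
      exact ⟨hux1, by simp [hz0, hzs]⟩
    · rw [SimpleGraph.compl_adj]
      push_neg
      intro _
      exact ⟨hvx2, by simp [hz0, hzs]⟩
  exact ⟨⟨_, _, _, _, key⟩, not_chordal_of_cycle4 _ _ _ _ _ key⟩
end

section
/- If a, b, c, d are vertices of a connected simple graph G such that a shortest path from a to d has exactly three edges {a,b}, {b,c}, {c,d}, then for every integer s ≥ 1 the vertices (a,0), (d,0), (b,s), (c,s) form an induced 4-cycle (a,0)-(d,0)-(b,s)-(c,s)-(a,0) in the complement of J_s(G). -/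
theorem jetGraph_compl_induced_C4 {V : Type*} (G : SimpleGraph V) (hG : G.Connected)
    (a b c d : V) (hab : G.Adj a b) (hbc : G.Adj b c) (hcd : G.Adj c d)
    (hdist : G.dist a d = 3) (s : ℕ) (hs : 1 ≤ s) :
    IsInducedCycle4 ((jetGraph G s)ᶜ)
      (a, 0) (d, 0) (b, Fin.last s) (c, Fin.last s) := by

  have had : ¬ G.Adj a d := by
    intro h
    have := SimpleGraph.dist_le h.toWalk
    simp [hdist] at this
  have hac : ¬ G.Adj a c := by
    intro h
    have := SimpleGraph.dist_le (h.toWalk.append hcd.toWalk)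
    simp [hdist, SimpleGraph.Walk.length_append] at this
  have hbd : ¬ G.Adj b d := by
    intro h
    have := SimpleGraph.dist_le (hab.toWalk.append h.toWalk)
    simp [hdist, SimpleGraph.Walk.length_append] at this
  have haned : a ≠ d := by rintro rfl; simp [SimpleGraph.dist_self] at hdist
  have hanec : a ≠ c := by rintro rfl; exact had hcd
  have hbned : b ≠ d := by rintro rfl; exact had hab
  have hlast : (0 : Fin (s+1)) ≠ Fin.last s := by
    intro h
    have := congrArg Fin.val h
    simp [Fin.last] at this
    omega
  refine ⟨?_, ?_, ?_, ?_, ?_, ?_, ?_, ?_, ?_, ?_, ?_, ?_⟩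
  · simp [haned]
  · simp [hlast]
  · simp [hlast]
  · simp [hlast]
  · intro h; exact hlast (congrArg Prod.snd h)
  · simp [hbc.ne]
  · exact ⟨by simp [haned], fun h => had h.1⟩
  · exact ⟨by simp [hbned.symm], fun h => hbd h.1.symm⟩
  · exact ⟨by simp [hbc.ne], fun h => absurd h.2 (by simp [Fin.last]; omega)⟩
  · exact ⟨by simp [hanec.symm], fun h => hac h.1.symm⟩
  · intro h
    exact h.2 ⟨hab, by simp [Fin.last]⟩
  · intro h
    exact h.2 ⟨hcd.symm, by simp [Fin.last]⟩
end

section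
/- For all integers n ≥ 2 and s ≥ 0, the complement of the jet graph J_s(K_n) of the complete graph on n vertices is chordal, i.e., J_s(K_n) is co-chordal. -/
theorem jetGraph_complete_cochordal (n s : ℕ) (hn : 2 ≤ n) :
    IsChordal ((jetGraph (⊤ : SimpleGraph (Fin n)) s)ᶜ) := by
  intro m hm hex
  obtain ⟨f, hinj, hadj⟩ := hex
  haveI : NeZero m := ⟨by omega⟩
  have hnz : ∀ k : ℕ, 0 < k → k < m → ((k : ℕ) : ZMod m) ≠ 0 := by
    intro k hk1 hk2 h
    rw [ZMod.natCast_eq_zero_iff] at h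
    have := Nat.le_of_dvd hk1 h
    omega
  have h1 : (1 : ZMod m) ≠ 0 := by
    have := hnz 1 (by omega) (by omega); exact_mod_cast this
  have h2 : (2 : ZMod m) ≠ 0 := by
    have := hnz 2 (by omega) (by omega); exact_mod_cast this
  have h3 : (3 : ZMod m) ≠ 0 := by
    have := hnz 3 (by omega) (by omega); exact_mod_cast this
  have hAdj : ∀ p q : Fin n × Fin (s + 1),
      ((jetGraph (⊤ : SimpleGraph (Fin n)) s)ᶜ).Adj p q ↔
        p ≠ q ∧ (p.1 = q.1 ∨ s < p.2.val + q.2.val) := by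
    intro p q
    simp only [SimpleGraph.compl_adj, jetGraph, SimpleGraph.top_adj]
    constructor
    · rintro ⟨hne, h⟩
      refine ⟨hne, ?_⟩
      by_cases he : p.1 = q.1
      · exact Or.inl he
      · exact Or.inr (lt_of_not_ge (fun hle => h ⟨he, hle⟩))
    · rintro ⟨hne, h⟩
      refine ⟨hne, ?_⟩
      rintro ⟨hne1, hle⟩
      rcases h with h | h
      · exact hne1 h
      · omega
  have hEdge : ∀ i j : ZMod m, (j = i + 1 ∨ i = j + 1) →
      ((f i).1 = (f j).1 ∨ s < (f i).2.val + (f j).2.val) :=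
    fun i j h => ((hAdj _ _).mp ((hadj i j).mpr h)).2
  have hNon : ∀ i j : ZMod m, i ≠ j → ¬(j = i + 1 ∨ i = j + 1) →
      (f i).1 ≠ (f j).1 ∧ (f i).2.val + (f j).2.val ≤ s := by
    intro i j hij hcon
    have hne : f i ≠ f j := fun h => hij (hinj h)
    have := (hadj i j).not.mpr hcon
    rw [hAdj] at this
    push_neg at this
    obtain ⟨ha, hb⟩ := this hne
    exact ⟨ha, by omega⟩
  have hSame : ∀ i j : ZMod m, i ≠ j → (f i).1 = (f j).1 → (j = i + 1 ∨ i = j + 1) := by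
    intro i j hij he
    exact (hadj i j).mp ((hAdj _ _).mpr ⟨fun h => hij (hinj h), Or.inl he⟩)
  have hBig : ∀ i j : ZMod m, i ≠ j → s < 2 * (f i).2.val → s < 2 * (f j).2.val →
      (j = i + 1 ∨ i = j + 1) := by
    intro i j hij hi hj
    exact (hadj i j).mp ((hAdj _ _).mpr ⟨fun h => hij (hinj h), Or.inr (by omega)⟩)
  -- Lemma A : no three consecutive small vertices
  have hA : ∀ i : ZMod m, 2 * (f i).2.val ≤ s → 2 * (f (i+1)).2.val ≤ s →
      2 * (f (i+1+1)).2.val ≤ s → False := by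
    intro i ha hb hc
    have e1 : (f i).1 = (f (i+1)).1 := by
      rcases hEdge i (i+1) (Or.inl rfl) with h | h
      · exact h
      · omega
    have e2 : (f (i+1)).1 = (f (i+1+1)).1 := by
      rcases hEdge (i+1) (i+1+1) (Or.inl rfl) with h | h
      · exact h
      · omega
    have hne : i ≠ i+1+1 := fun h => h2 (by linear_combination -h)
    rcases hSame i (i+1+1) hne (e1.trans e2) with h | h
    · exact h1 (by linear_combination h)
    · exact h3 (by linear_combination -h)
  -- there is a big vertex
  obtain ⟨b, hb⟩ : ∃ i : ZMod m, s < 2 * (f i).2.val := by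
    by_contra h
    push_neg at h
    exact hA 0 (h 0) (h (0+1)) (h (0+1+1))
  -- there are two consecutive big vertices t, t+1
  obtain ⟨t, ht, ht1⟩ : ∃ t : ZMod m, s < 2 * (f t).2.val ∧ s < 2 * (f (t+1)).2.val := by
    by_cases hc1 : s < 2 * (f (b+1)).2.val
    · exact ⟨b, hb, hc1⟩
    by_cases hc2 : s < 2 * (f (b+1+1)).2.val
    · exfalso
      have hne : b ≠ b+1+1 := fun h => h2 (by linear_combination -h)
      rcases hBig b (b+1+1) hne hb hc2 with h | h
      · exact h1 (by linear_combination h)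
      · exact h3 (by linear_combination -h)
    by_cases hc3 : s < 2 * (f (b+1+1+1)).2.val
    · have hne : b+1+1+1 ≠ b := fun h => h3 (by linear_combination h)
      rcases hBig (b+1+1+1) b hne hc3 hb with h | h
      · exact ⟨b+1+1+1, hc3, by rw [← h]; exact hb⟩
      · exfalso; exact h2 (by linear_combination h)
    · exfalso
      exact hA (b+1) (by omega) (by omega) (by omega)
  -- t+2 and t+3 are small
  have hs2 : 2 * (f (t+1+1)).2.val ≤ s := by
    by_contra h
    push_neg at h
    have hne : t ≠ t+1+1 := fun h => h2 (by linear_combination -h)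
    rcases hBig t (t+1+1) hne ht h with h' | h'
    · exact h1 (by linear_combination h')
    · exact h3 (by linear_combination -h')
  have hs3 : 2 * (f (t+1+1+1)).2.val ≤ s := by
    by_contra h
    push_neg at h
    have hne : t+1 ≠ t+1+1+1 := fun h => h2 (by linear_combination -h)
    rcases hBig (t+1) (t+1+1+1) hne ht1 h with h' | h'
    · exact h1 (by linear_combination h')
    · exact h3 (by linear_combination -h')
  by_cases h4 : (4 : ZMod m) = 0
  · -- m = 4 case: final arithmetic contradiction on the 4-cycle
    -- edge (t+2)-(t+3) must be same-coordinate
    have erw : (f (t+1+1)).1 = (f (t+1+1+1)).1 := by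
      rcases hEdge (t+1+1) (t+1+1+1) (Or.inl rfl) with h | h
      · exact h
      · omega
    -- non-edge t, t+2
    have hpr := hNon t (t+1+1) (fun h => h2 (by linear_combination -h)) (by
      rintro (h | h)
      · exact h1 (by linear_combination h)
      · exact h3 (by linear_combination -h))
    -- non-edge t+1, t+3
    have hqw := hNon (t+1) (t+1+1+1) (fun h => h2 (by linear_combination -h)) (by
      rintro (h | h)
      · exact h1 (by linear_combination h)
      · exact h3 (by linear_combination -h))
    -- edge (t+1)-(t+2) must be sum-type
    have eqr : s < (f (t+1)).2.val + (f (t+1+1)).2.val := by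
      rcases hEdge (t+1) (t+1+1) (Or.inl rfl) with h | h
      · exact absurd (h.trans erw) hqw.1
      · exact h
    -- edge (t+3)-t must be sum-type
    have ewp : s < (f (t+1+1+1)).2.val + (f t).2.val := by
      rcases hEdge (t+1+1+1) t (Or.inl (by linear_combination -h4)) with h | h
      · exact absurd (erw.trans h).symm hpr.1
      · exact h
    have := hpr.2
    have := hqw.2
    omega
  · -- m ≠ 4 : t+4 is small too, giving three consecutive small vertices
    have hs4 : 2 * (f (t+1+1+1+1)).2.val ≤ s := by
      by_contra h
      push_neg at h
      have hne : t+1 ≠ t+1+1+1+1 := fun h => h3 (by linear_combination -h)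
      rcases hBig (t+1) (t+1+1+1+1) hne ht1 h with h' | h'
      · exact h2 (by linear_combination h')
      · exact h4 (by linear_combination -h')
    exact hA (t+1+1) hs2 hs3 hs4
end

section
/- Order the vertices of the complement of J_s(K_n) by (x_i, t) < (x_j, u) iff t < u, or t = u and i < j. Then this total order is a simplicial (perfect elimination) order: for each vertex v, the neighbors of v among the vertices ≥ v induce a complete subgraph. -/
/-- The order on vertices of `Jₛ(Kₙ)ᶜ`: `(xᵢ,t) ≤ (xⱼ,u)` iff `t < u`, or `t = u` and `i ≤ j`. -/
def jetOrderLE {n s : ℕ} (v w : Fin n × Fin (s + 1)) : Prop :=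
  v.2.val < w.2.val ∨ (v.2 = w.2 ∧ v.1.val ≤ w.1.val)

theorem jetGraph_complete_simplicial_order (n s : ℕ) :
    ∀ v w z : Fin n × Fin (s + 1),
      jetOrderLE v w → jetOrderLE v z → w ≠ z →
      ((jetGraph (⊤ : SimpleGraph (Fin n)) s)ᶜ).Adj v w →
      ((jetGraph (⊤ : SimpleGraph (Fin n)) s)ᶜ).Adj v z →
      ((jetGraph (⊤ : SimpleGraph (Fin n)) s)ᶜ).Adj w z := by
  intro v w z hvw hvz hwz h1 h2
  simp only [jetOrderLE] at hvw hvz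
  simp only [SimpleGraph.compl_adj, jetGraph, SimpleGraph.top_adj, ne_eq, not_and, not_le] at h1 h2 ⊢
  refine ⟨hwz, fun hne => ?_⟩
  have hne1 : v ≠ w := h1.1
  have hne2 : v ≠ z := h2.1
  have key1 : (v.1 = w.1 ∧ v.2.val < w.2.val) ∨ s < v.2.val + w.2.val := by
    by_cases hv : v.1 = w.1
    · left
      refine ⟨hv, ?_⟩
      rcases hvw with h | ⟨h, h'⟩
      · exact h
      · exact absurd (Prod.ext hv h) hne1
    · exact Or.inr (h1.2 hv)
  have key2 : (v.1 = z.1 ∧ v.2.val < z.2.val) ∨ s < v.2.val + z.2.val := by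
    by_cases hv : v.1 = z.1
    · left
      refine ⟨hv, ?_⟩
      rcases hvz with h | ⟨h, h'⟩
      · exact h
      · exact absurd (Prod.ext hv h) hne2
    · exact Or.inr (h2.2 hv)
  have hw2 : v.2.val ≤ w.2.val := by rcases hvw with h | ⟨h, _⟩ <;> omega
  have hz2 : v.2.val ≤ z.2.val := by rcases hvz with h | ⟨h, _⟩ <;> omega
  rcases key1 with ⟨e1, l1⟩ | b1
  · rcases key2 with ⟨e2, l2⟩ | b2
    · exact absurd (e1 ▸ e2) hne
    · omega
  · omega
end

section
/- For all integers n ≥ 2 and s ≥ 0, the complement of the jet graph J_s(K_{1,n}) of the star graph is chordal, i.e., J_s(K_{1,n}) is co-chordal. -/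
/-- The star graph `K_{1,n}` with internal vertex `0` and leaves `1,…,n`. -/
def starGraph (n : ℕ) : SimpleGraph (Fin (n + 1)) where
  Adj a b := a ≠ b ∧ (a = 0 ∨ b = 0)
  symm := by
    constructor
    intro a b h
    exact ⟨h.1.symm, h.2.symm⟩
  loopless := by
    constructor
    intro a h
    exact h.1 rfl

lemma castInjLt {m a b : ℕ} (ha : a < m) (hb : b < m) :
    ((a : ZMod m) = (b : ZMod m)) ↔ a = b := by
  haveI : NeZero m := ⟨by omega⟩
  constructor
  · intro h
    have := congrArg ZMod.val h
    rwa [ZMod.val_cast_of_lt ha, ZMod.val_cast_of_lt hb] at this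
  · rintro rfl; rfl

theorem jetGraph_star_cochordal (n s : ℕ) (hn : 2 ≤ n) :
    IsChordal ((jetGraph (starGraph n) s)ᶜ) := by
  intro m hm h
  obtain ⟨f, hinj, hadj⟩ := h
  -- nonconsecutive distinct indices are adjacent in the jet graph
  have key : ∀ i j : ZMod m, i ≠ j → ¬(j = i + 1 ∨ i = j + 1) →
      (jetGraph (starGraph n) s).Adj (f i) (f j) := by
    intro i j hne hnc
    have h1 : ¬ ((jetGraph (starGraph n) s)ᶜ).Adj (f i) (f j) := by
      rw [hadj]; exact hnc
    rw [SimpleGraph.compl_adj] at h1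
    push_neg at h1
    exact h1 (hinj.ne hne)
  -- from jet adjacency: exactly one endpoint is the center, and sum small
  have zd : ∀ i j : ZMod m, (jetGraph (starGraph n) s).Adj (f i) (f j) →
      ((f i).1 = 0 ↔ ¬ (f j).1 = 0) ∧ (f i).2.val + (f j).2.val ≤ s := by
    intro i j hA
    obtain ⟨⟨hne, hor⟩, hs⟩ := hA
    refine ⟨⟨fun h0 h1 => hne (h0.trans h1.symm), fun h1 => hor.resolve_right h1⟩, hs⟩
  -- consecutive edges: if the center marker differs, sums are big
  have cons : ∀ i j : ZMod m, (j = i + 1 ∨ i = j + 1) →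
      ¬ ((f i).1 = 0 ↔ (f j).1 = 0) → s < (f i).2.val + (f j).2.val := by
    intro i j hc hdiff
    have hA : ((jetGraph (starGraph n) s)ᶜ).Adj (f i) (f j) := (hadj i j).2 hc
    rw [SimpleGraph.compl_adj] at hA
    have hstar : (starGraph n).Adj (f i).1 (f j).1 := by
      constructor
      · intro he; exact hdiff ⟨fun h0 => he ▸ h0, fun h0 => he ▸ h0⟩
      · by_contra hno
        push_neg at hno
        exact hdiff ⟨fun h0 => absurd h0 hno.1, fun h0 => absurd h0 hno.2⟩
    by_contra hle
    push_neg at hle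
    exact hA.2 ⟨hstar, hle⟩
  rcases lt_or_ge m 6 with hm6 | hm6
  · interval_cases m
    · -- m = 4
      have h02 := zd 0 2 (key 0 2 (by decide) (by decide))
      have h13 := zd 1 3 (key 1 3 (by decide) (by decide))
      by_cases hp : ((f 0).1 = 0 ↔ (f 1).1 = 0)
      · have c12 : s < (f 1).2.val + (f 2).2.val :=
          cons 1 2 (by decide) (by tauto)
        have c30 : s < (f 3).2.val + (f 0).2.val :=
          cons 3 0 (by decide) (by tauto)
        omega
      · have c01 : s < (f 0).2.val + (f 1).2.val :=
          cons 0 1 (by decide) hp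
        have c23 : s < (f 2).2.val + (f 3).2.val :=
          cons 2 3 (by decide) (by tauto)
        omega
    · -- m = 5
      have h02 := (zd 0 2 (key 0 2 (by decide) (by decide))).1
      have h03 := (zd 0 3 (key 0 3 (by decide) (by decide))).1
      have h13 := (zd 1 3 (key 1 3 (by decide) (by decide))).1
      have h14 := (zd 1 4 (key 1 4 (by decide) (by decide))).1
      have h24 := (zd 2 4 (key 2 4 (by decide) (by decide))).1
      tauto
  · -- m ≥ 6 : vertices 0, 2, 4 pairwise nonconsecutive
    have hcast : ∀ a : ℕ, ((a : ZMod m)) + 1 = ((a + 1 : ℕ) : ZMod m) := by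
      intro a; push_cast; ring
    have hne' : ∀ a b : ℕ, a < m → b < m → a ≠ b →
        ((a : ZMod m)) ≠ ((b : ZMod m)) := by
      intro a b ha hb hab he
      exact hab ((castInjLt ha hb).1 he)
    have h02 := (zd ((0:ℕ):ZMod m) ((2:ℕ):ZMod m)
      (key _ _ (hne' 0 2 (by omega) (by omega) (by omega))
        (by
          rw [hcast, hcast]
          rintro (h | h)
          · exact hne' 2 1 (by omega) (by omega) (by omega) h
          · exact hne' 0 3 (by omega) (by omega) (by omega) h))).1
    have h24 := (zd ((2:ℕ):ZMod m) ((4:ℕ):ZMod m)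
      (key _ _ (hne' 2 4 (by omega) (by omega) (by omega))
        (by
          rw [hcast, hcast]
          rintro (h | h)
          · exact hne' 4 3 (by omega) (by omega) (by omega) h
          · exact hne' 2 5 (by omega) (by omega) (by omega) h))).1
    have h04 := (zd ((0:ℕ):ZMod m) ((4:ℕ):ZMod m)
      (key _ _ (hne' 0 4 (by omega) (by omega) (by omega))
        (by
          rw [hcast, hcast]
          rintro (h | h)
          · exact hne' 4 1 (by omega) (by omega) (by omega) h
          · exact hne' 0 5 (by omega) (by omega) (by omega) h))).1
    tauto
end

section
/- For integers n ≥ 1, s ≥ 0, and each p ∈ {0,...,s+1}, the set C_p = ({x_1,...,x_n} × {0,...,s-p}) ∪ ({y_1,...,y_n} × {0,...,p-1}) is a minimal vertex cover of the jet graph J_s(K_{n,n}) of cardinality n(s+1). -/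
/-- `C` is a vertex cover of `H`. -/
def IsVertexCover {W : Type*} (H : SimpleGraph W) (C : Set W) : Prop :=
  ∀ a b : W, H.Adj a b → a ∈ C ∨ b ∈ C

/-- `C` is a minimal vertex cover of `H`. -/
def IsMinimalVertexCover {W : Type*} (H : SimpleGraph W) (C : Set W) : Prop :=
  IsVertexCover H C ∧ ∀ D : Set W, D ⊂ C → ¬ IsVertexCover H D

/-- The cover `C_p` of `Jₛ(K_{n,n})`: the `x`-vertices with index `≤ s - p`
together with the `y`-vertices with index `≤ p - 1`. -/
def bipartiteJetCover (n s p : ℕ) : Set ((Fin n ⊕ Fin n) × Fin (s + 1)) :=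
  {q | (q.1.isLeft = true ∧ q.2.val + p ≤ s) ∨ (q.1.isRight = true ∧ q.2.val < p)}

/-- Enumeration of the cover. -/
def bjcFun (n s p : ℕ) (z : Fin n × Fin (s + 1)) : (Fin n ⊕ Fin n) × Fin (s + 1) :=
  if z.2.val + p ≤ s then (Sum.inl z.1, z.2)
  else (Sum.inr z.1, ⟨z.2.val - (s + 1 - p), by omega⟩)

lemma bjcFun_inj (n s p : ℕ) : Function.Injective (bjcFun n s p) := by
  rintro ⟨x, i⟩ ⟨y, j⟩ h
  simp only [bjcFun] at h
  try dsimp only at h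
  split_ifs at h with h1 h2 h2 <;>
    simp only [Prod.mk.injEq, Sum.inl.injEq, Sum.inr.injEq, reduceCtorEq, false_and,
      Fin.mk.injEq] at h
  · exact Prod.ext h.1 h.2
  · refine Prod.ext h.1 (Fin.ext ?_)
    show i.val = j.val
    have h2v : i.val - (s + 1 - p) = j.val - (s + 1 - p) := h.2
    have h1' : ¬ (i.val + p ≤ s) := h1
    have h2' : ¬ (j.val + p ≤ s) := h2
    have hi := i.isLt
    have hj := j.isLt
    omega

lemma bjcFun_range (n s p : ℕ) (hp : p ≤ s + 1) :
    Set.range (bjcFun n s p) = bipartiteJetCover n s p := by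
  ext q
  obtain ⟨a, i⟩ := q
  constructor
  · rintro ⟨⟨x, j⟩, hz⟩
    rw [← hz]
    simp only [bjcFun]
    try dsimp only
    split_ifs with h1
    · exact Or.inl ⟨rfl, h1⟩
    · refine Or.inr ⟨rfl, ?_⟩
      have := j.isLt
      dsimp only
      omega
  · rintro (⟨hL, hle⟩ | ⟨hR, hlt⟩)
    · obtain ⟨x, rfl⟩ := Sum.isLeft_iff.mp hL
      dsimp only at hle
      refine ⟨(x, i), ?_⟩
      simp only [bjcFun]
      try dsimp only
      rw [if_pos hle]
    · obtain ⟨y, rfl⟩ := Sum.isRight_iff.mp hR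
      dsimp only at hlt
      refine ⟨(y, ⟨i.val + (s + 1 - p), by omega⟩), ?_⟩
      simp only [bjcFun]
      rw [if_neg (by omega)]
      refine Prod.ext rfl (Fin.ext ?_)
      dsimp only
      omega

theorem jetGraph_bipartite_cover_minimal (n s p : ℕ) (hn : 1 ≤ n) (hp : p ≤ s + 1) :
    IsMinimalVertexCover (jetGraph (completeBipartiteGraph (Fin n) (Fin n)) s)
      (bipartiteJetCover n s p) ∧
    (bipartiteJetCover n s p).ncard = n * (s + 1) := by
  refine ⟨⟨?_, ?_⟩, ?_⟩
  · -- it is a vertex cover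
    rintro ⟨a, i⟩ ⟨b, j⟩ ⟨hadj, hij⟩
    simp only [completeBipartiteGraph_adj] at hadj
    dsimp only at hij ⊢
    rcases hadj with ⟨hL, hR⟩ | ⟨hR, hL⟩
    · by_cases hc : i.val + p ≤ s
      · exact Or.inl (Or.inl ⟨hL, hc⟩)
      · exact Or.inr (Or.inr ⟨hR, by dsimp only; omega⟩)
    · by_cases hc : j.val + p ≤ s
      · exact Or.inr (Or.inl ⟨hL, hc⟩)
      · exact Or.inl (Or.inr ⟨hR, by dsimp only; omega⟩)
  · -- minimality
    intro D hD hcov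
    obtain ⟨⟨a, i⟩, hqC, hqD⟩ := Set.exists_of_ssubset hD
    have hsub := hD.subset
    cases a with
    | inl x =>
      have hip : i.val + p ≤ s := by
        rcases hqC with ⟨_, h⟩ | ⟨h, _⟩
        · exact h
        · simp at h
      have hps : p ≤ s := by omega
      have hedge := hcov (Sum.inl x, i) (Sum.inr ⟨0, hn⟩, ⟨p, by omega⟩)
        ⟨by simp, by dsimp; omega⟩
      rcases hedge with h | h
      · exact hqD h
      · have := hsub h
        rcases this with ⟨h', _⟩ | ⟨_, h'⟩
        · simp at h'
        · dsimp at h'; omega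
    | inr y =>
      have hiy : i.val < p := by
        rcases hqC with ⟨h, _⟩ | ⟨_, h⟩
        · simp at h
        · exact h
      have his : i.val ≤ s := by omega
      have hedge := hcov (Sum.inl ⟨0, hn⟩, ⟨s - i.val, by omega⟩) (Sum.inr y, i)
        ⟨by simp, by dsimp; omega⟩
      rcases hedge with h | h
      · have := hsub h
        rcases this with ⟨_, h'⟩ | ⟨h', _⟩
        · dsimp at h'; omega
        · simp at h'
      · exact hqD h
  · -- cardinality
    rw [← bjcFun_range n s p hp, ← Set.image_univ,
      Set.ncard_image_of_injective _ (bjcFun_inj n s p), Set.ncard_univ,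
      Nat.card_eq_fintype_card]
    simp
end

section
/- For integers n ≥ 1 and s ≥ 0, every minimal vertex cover of J_s(K_{n,n}) equals C_p for some p ∈ {0,...,s+1}, where C_p = ({x_1,...,x_n} × {0,...,s-p}) ∪ ({y_1,...,y_n} × {0,...,p-1}). -/
theorem jetGraph_bipartite_cover_classification (n s : ℕ) (hn : 1 ≤ n)
    (C : Set ((Fin n ⊕ Fin n) × Fin (s + 1)))
    (hC : IsMinimalVertexCover (jetGraph (completeBipartiteGraph (Fin n) (Fin n)) s) C) :
    ∃ p : ℕ, p ≤ s + 1 ∧ C = bipartiteJetCover n s p := by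
  obtain ⟨hCov, hMin⟩ := hC
  set G := jetGraph (completeBipartiteGraph (Fin n) (Fin n)) s with hG
  have i0 : Fin n := ⟨0, hn⟩
  -- adjacency helper
  have hadj : ∀ (i j : Fin n) (t u : Fin (s+1)), t.val + u.val ≤ s →
      G.Adj (Sum.inl i, t) (Sum.inr j, u) := by
    intro i j t u h
    exact ⟨Or.inl ⟨rfl, rfl⟩, h⟩
  -- removal lemma (left)
  have removalL : ∀ (i : Fin n) (t : Fin (s+1)),
      (∀ (j : Fin n) (u : Fin (s+1)), t.val + u.val ≤ s → (Sum.inr j, u) ∈ C) →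
      (Sum.inl i, t) ∉ C := by
    intro i t hnb hmem
    refine hMin (C \ {(Sum.inl i, t)})
      ((Set.ssubset_iff_of_subset Set.diff_subset).2 ⟨_, hmem, fun h => h.2 rfl⟩) ?_
    rintro ⟨a1 | a1, a2⟩ ⟨b1 | b1, b2⟩ ⟨hbip, hsum⟩
    · simp at hbip
    · by_cases h : (Sum.inl a1, a2) = ((Sum.inl i, t) : (Fin n ⊕ Fin n) × Fin (s+1))
      · refine Or.inr ⟨?_, by simp⟩
        rw [Prod.mk.injEq] at h
        obtain ⟨h1, h2⟩ := h
        subst h2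
        exact hnb b1 b2 hsum
      · rcases hCov _ _ ⟨hbip, hsum⟩ with ha | hb
        · exact Or.inl ⟨ha, h⟩
        · exact Or.inr ⟨hb, by simp⟩
    · by_cases h : (Sum.inl b1, b2) = ((Sum.inl i, t) : (Fin n ⊕ Fin n) × Fin (s+1))
      · refine Or.inl ⟨?_, by simp⟩
        rw [Prod.mk.injEq] at h
        obtain ⟨h1, h2⟩ := h
        have hsum' : a2.val + b2.val ≤ s := hsum
        subst h2
        exact hnb a1 a2 (by omega)
      · rcases hCov _ _ ⟨hbip, hsum⟩ with ha | hb
        · exact Or.inl ⟨ha, by simp⟩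
        · exact Or.inr ⟨hb, h⟩
    · simp at hbip
  -- removal lemma (right)
  have removalR : ∀ (i : Fin n) (t : Fin (s+1)),
      (∀ (j : Fin n) (u : Fin (s+1)), u.val + t.val ≤ s → (Sum.inl j, u) ∈ C) →
      (Sum.inr i, t) ∉ C := by
    intro i t hnb hmem
    refine hMin (C \ {(Sum.inr i, t)})
      ((Set.ssubset_iff_of_subset Set.diff_subset).2 ⟨_, hmem, fun h => h.2 rfl⟩) ?_
    rintro ⟨a1 | a1, a2⟩ ⟨b1 | b1, b2⟩ ⟨hbip, hsum⟩
    · simp at hbip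
    · by_cases h : (Sum.inr b1, b2) = ((Sum.inr i, t) : (Fin n ⊕ Fin n) × Fin (s+1))
      · refine Or.inl ⟨?_, by simp⟩
        rw [Prod.mk.injEq] at h
        obtain ⟨h1, h2⟩ := h
        subst h2
        exact hnb a1 a2 hsum
      · rcases hCov _ _ ⟨hbip, hsum⟩ with ha | hb
        · exact Or.inl ⟨ha, by simp⟩
        · exact Or.inr ⟨hb, h⟩
    · by_cases h : (Sum.inr a1, a2) = ((Sum.inr i, t) : (Fin n ⊕ Fin n) × Fin (s+1))
      · refine Or.inr ⟨?_, by simp⟩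
        rw [Prod.mk.injEq] at h
        obtain ⟨h1, h2⟩ := h
        have hsum' : a2.val + b2.val ≤ s := hsum
        subst h2
        exact hnb b1 b2 (by omega)
      · rcases hCov _ _ ⟨hbip, hsum⟩ with ha | hb
        · exact Or.inl ⟨ha, h⟩
        · exact Or.inr ⟨hb, by simp⟩
    · simp at hbip
  -- monotonicity of right membership
  have memR_mono : ∀ (j j' : Fin n) (u u' : Fin (s+1)), u'.val ≤ u.val →
      (Sum.inr j, u) ∈ C → (Sum.inr j', u') ∈ C := by
    intro j j' u u' hle hmem
    by_contra h'
    refine removalR j u (fun k v hv => ?_) hmem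
    rcases hCov (Sum.inl k, v) (Sum.inr j', u') (hadj k j' v u' (by omega)) with ha | hb
    · exact ha
    · exact absurd hb h'
  -- define p
  set S : Set ℕ := {u : ℕ | ∀ hu : u < s+1, (Sum.inr i0, ⟨u, hu⟩) ∉ C} with hS
  have hSne : (s+1) ∈ S := fun hu => absurd hu (lt_irrefl _)
  set p : ℕ := sInf S with hp
  have hp_le : p ≤ s + 1 := Nat.sInf_le hSne
  have hlt : ∀ u : Fin (s+1), u.val < p → (Sum.inr i0, u) ∈ C := by
    intro u hu
    have : u.val ∉ S := fun h => Nat.not_lt.2 (Nat.sInf_le h) hu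
    rw [hS] at this
    simp only [Set.mem_setOf_eq] at this
    push_neg at this
    obtain ⟨hu', hmem⟩ := this
    rwa [Fin.eta] at hmem
  have hge : ∀ (hps : p < s+1), (Sum.inr i0, ⟨p, hps⟩) ∉ C := by
    intro hps
    exact Nat.sInf_mem (⟨s+1, hSne⟩ : S.Nonempty) hps
  refine ⟨p, hp_le, ?_⟩
  ext ⟨a | a, t⟩
  · simp only [bipartiteJetCover, Set.mem_setOf_eq, Sum.isLeft_inl, Sum.isRight_inl]
    constructor
    · intro hmem
      refine Or.inl ⟨by simp, ?_⟩
      by_contra h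
      refine removalL a t (fun j u hu => ?_) hmem
      exact memR_mono i0 j u u le_rfl (hlt u (by omega))
    · rintro (⟨-, h⟩ | ⟨h, -⟩)
      · have hps : p < s + 1 := by omega
        rcases hCov (Sum.inl a, t) (Sum.inr i0, ⟨p, hps⟩)
            (hadj a i0 t ⟨p, hps⟩ h) with ha | hb
        · exact ha
        · exact absurd hb (hge hps)
      · exact absurd h (by simp)
  · simp only [bipartiteJetCover, Set.mem_setOf_eq, Sum.isLeft_inr, Sum.isRight_inr]
    constructor
    · intro hmem
      refine Or.inr ⟨by simp, ?_⟩
      by_contra h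
      have h' : p ≤ t.val := by omega
      have hps : p < s + 1 := by omega
      exact hge hps (memR_mono a i0 t ⟨p, hps⟩ h' hmem)
    · rintro (⟨h, -⟩ | ⟨-, h⟩)
      · exact absurd h (by simp)
      · exact memR_mono i0 a t t le_rfl (hlt t h)
end

section
/- For all integers n ≥ 1 and s ≥ 0, the jet graph J_s(K_{n,n}) is very well covered: every minimal vertex cover of J_s(K_{n,n}) has cardinality n(s+1), which is half the number of its vertices. -/
theorem jetGraph_bipartite_very_well_covered (n s : ℕ) (hn : 1 ≤ n)
    (C : Set ((Fin n ⊕ Fin n) × Fin (s + 1)))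
    (hC : IsMinimalVertexCover (jetGraph (completeBipartiteGraph (Fin n) (Fin n)) s) C) :
    C.ncard = n * (s + 1) ∧
    2 * (n * (s + 1)) = Fintype.card ((Fin n ⊕ Fin n) × Fin (s + 1)) := by
  classical
  obtain ⟨hcov, hmin⟩ := hC
  set G := jetGraph (completeBipartiteGraph (Fin n) (Fin n)) s with hGdef
  have a0 : Fin n := ⟨0, hn⟩
  -- structure of adjacency
  have adjCases : ∀ p q, G.Adj p q →
      (∃ (a b : Fin n) (i j : Fin (s+1)), p = (Sum.inl a, i) ∧ q = (Sum.inr b, j) ∧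
        i.val + j.val ≤ s) ∨
      (∃ (a b : Fin n) (i j : Fin (s+1)), p = (Sum.inr a, i) ∧ q = (Sum.inl b, j) ∧
        i.val + j.val ≤ s) := by
    rintro ⟨x, i⟩ ⟨y, j⟩ ⟨hadj, hle⟩
    rcases x with a | a <;> rcases y with b | b <;>
      simp_all [completeBipartiteGraph]
  have hAdj : ∀ (a b : Fin n) (i j : Fin (s+1)), i.val + j.val ≤ s →
      G.Adj (Sum.inl a, i) (Sum.inr b, j) := by
    intro a b i j h
    exact ⟨by simp [completeBipartiteGraph], h⟩
  -- the level sets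
  set S : Finset (Fin (s+1)) :=
    Finset.univ.filter (fun i => ∀ a : Fin n, (Sum.inl a, i) ∈ C) with hSdef
  set T : Finset (Fin (s+1)) :=
    Finset.univ.filter (fun j => ∀ b : Fin n, (Sum.inr b, j) ∈ C) with hTdef
  have hSmem : ∀ i : Fin (s+1), i ∈ S ↔ ∀ a : Fin n, (Sum.inl a, i) ∈ C := by
    intro i; simp [hSdef]
  have hTmem : ∀ j : Fin (s+1), j ∈ T ↔ ∀ b : Fin n, (Sum.inr b, j) ∈ C := by
    intro j; simp [hTdef]
  -- cover condition in terms of S, T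
  have hST : ∀ i j : Fin (s+1), i.val + j.val ≤ s → i ∈ S ∨ j ∈ T := by
    intro i j hle
    by_contra h
    push_neg at h
    obtain ⟨hiS, hjT⟩ := h
    rw [hSmem] at hiS
    push_neg at hiS
    obtain ⟨a, ha⟩ := hiS
    apply hjT
    rw [hTmem]
    intro b
    rcases hcov _ _ (hAdj a b i j hle) with h | h
    · exact absurd h ha
    · exact h
  -- membership characterization: C is determined by S and T
  have memL : ∀ (a : Fin n) (i : Fin (s+1)), (Sum.inl a, i) ∈ C ↔ i ∈ S := by
    intro a i
    constructor
    · intro hmem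
      by_contra hiS
      apply hmin (C \ {(Sum.inl a, i)})
        ((Set.ssubset_iff_of_subset Set.diff_subset).mpr ⟨_, hmem, by simp⟩)
      intro p q hadj
      rcases adjCases p q hadj with ⟨a', b', i', j', hp, hq, hle⟩ |
        ⟨a', b', i', j', hp, hq, hle⟩
      · subst hp; subst hq
        by_cases hji : i' = i
        · subst hji
          rcases hST i' j' hle with h | h
          · exact absurd h hiS
          · exact Or.inr ⟨(hTmem j').mp h b', by simp⟩
        · rcases hcov _ _ hadj with h | h
          · exact Or.inl ⟨h, by simp; intro _; exact fun hh => hji hh⟩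
          · exact Or.inr ⟨h, by simp⟩
      · subst hp; subst hq
        by_cases hji : j' = i
        · subst hji
          rcases hST j' i' (by omega) with h | h
          · exact absurd h hiS
          · exact Or.inl ⟨(hTmem i').mp h a', by simp⟩
        · rcases hcov _ _ hadj with h | h
          · exact Or.inl ⟨h, by simp⟩
          · exact Or.inr ⟨h, by simp; intro _; exact fun hh => hji hh⟩
    · intro hi
      exact (hSmem i).mp hi a
  have memR : ∀ (b : Fin n) (j : Fin (s+1)), (Sum.inr b, j) ∈ C ↔ j ∈ T := by
    intro b j
    constructor
    · intro hmem
      by_contra hjT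
      apply hmin (C \ {(Sum.inr b, j)})
        ((Set.ssubset_iff_of_subset Set.diff_subset).mpr ⟨_, hmem, by simp⟩)
      intro p q hadj
      rcases adjCases p q hadj with ⟨a', b', i', j', hp, hq, hle⟩ |
        ⟨a', b', i', j', hp, hq, hle⟩
      · subst hp; subst hq
        by_cases hji : j' = j
        · subst hji
          rcases hST i' j' hle with h | h
          · exact Or.inl ⟨(hSmem i').mp h a', by simp⟩
          · exact absurd h hjT
        · rcases hcov _ _ hadj with h | h
          · exact Or.inl ⟨h, by simp⟩
          · exact Or.inr ⟨h, by simp; intro _; exact fun hh => hji hh⟩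
      · subst hp; subst hq
        by_cases hji : i' = j
        · subst hji
          rcases hST j' i' (by omega) with h | h
          · exact Or.inr ⟨(hSmem j').mp h b', by simp⟩
          · exact absurd h hjT
        · rcases hcov _ _ hadj with h | h
          · exact Or.inl ⟨h, by simp; intro _; exact fun hh => hji hh⟩
          · exact Or.inr ⟨h, by simp⟩
    · intro hj
      exact (hTmem j).mp hj b
  -- at most one of i ∈ S, (s-i) ∈ T
  have hone : ∀ i : Fin (s+1), ¬ (i ∈ S ∧ (⟨s - i.val, by omega⟩ : Fin (s+1)) ∈ T) := by
    rintro i ⟨hiS, hiT⟩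
    -- remove a left vertex at level i: get j ∉ T with i + j ≤ s
    have ex1 : ∃ j : Fin (s+1), i.val + j.val ≤ s ∧ j ∉ T := by
      have hx : (Sum.inl a0, i) ∈ C := (memL a0 i).mpr hiS
      have hnotcov := hmin (C \ {(Sum.inl a0, i)})
        ((Set.ssubset_iff_of_subset Set.diff_subset).mpr ⟨_, hx, by simp⟩)
      rw [IsVertexCover] at hnotcov
      push_neg at hnotcov
      obtain ⟨p, q, hadj, hp, hq⟩ := hnotcov
      rcases adjCases p q hadj with ⟨a', b', i', j', hp', hq', hle⟩ |
        ⟨a', b', i', j', hp', hq', hle⟩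
      · subst hp'; subst hq'
        simp only [Set.mem_diff, Set.mem_singleton_iff, not_and, not_not] at hp hq
        have hq' : (Sum.inr b', j') ∉ C := by
          intro h; have := hq h; simp at this
        have hjT : j' ∉ T := fun h => hq' ((memR b' j').mpr h)
        by_cases hiC : (Sum.inl a', i') ∈ C
        · have := hp hiC
          have : i' = i := by
            simpa using congrArg Prod.snd this
          subst this
          exact ⟨j', hle, hjT⟩
        · have : i' ∉ S := fun h => hiC ((memL a' i').mpr h)
          rcases hST i' j' hle with h | h
          · exact absurd h this
          · exact absurd h hjT
      · subst hp'; subst hq'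
        simp only [Set.mem_diff, Set.mem_singleton_iff, not_and, not_not] at hp hq
        have hp' : (Sum.inr a', i') ∉ C := by
          intro h; have := hp h; simp at this
        have hiT' : i' ∉ T := fun h => hp' ((memR a' i').mpr h)
        by_cases hjC : (Sum.inl b', j') ∈ C
        · have := hq hjC
          have : j' = i := by
            simpa using congrArg Prod.snd this
          subst this
          exact ⟨i', by omega, hiT'⟩
        · have : j' ∉ S := fun h => hjC ((memL b' j').mpr h)
          rcases hST j' i' (by omega) with h | h
          · exact absurd h this
          · exact absurd h hiT'
    -- remove a right vertex at level s - i: get i' ∉ S with i' ≤ i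
    have ex2 : ∃ i' : Fin (s+1), i'.val + (s - i.val) ≤ s ∧ i' ∉ S := by
      have hx : (Sum.inr a0, (⟨s - i.val, by omega⟩ : Fin (s+1))) ∈ C := (memR a0 _).mpr hiT
      have hnotcov := hmin (C \ {(Sum.inr a0, (⟨s - i.val, by omega⟩ : Fin (s+1)))})
        ((Set.ssubset_iff_of_subset Set.diff_subset).mpr ⟨_, hx, by simp⟩)
      rw [IsVertexCover] at hnotcov
      push_neg at hnotcov
      obtain ⟨p, q, hadj, hp, hq⟩ := hnotcov
      rcases adjCases p q hadj with ⟨a', b', i', j', hp', hq', hle⟩ |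
        ⟨a', b', i', j', hp', hq', hle⟩
      · subst hp'; subst hq'
        simp only [Set.mem_diff, Set.mem_singleton_iff, not_and, not_not] at hp hq
        have hp'' : (Sum.inl a', i') ∉ C := by
          intro h; have := hp h; simp at this
        have hiS' : i' ∉ S := fun h => hp'' ((memL a' i').mpr h)
        by_cases hjC : (Sum.inr b', j') ∈ C
        · have := hq hjC
          have hj : j' = (⟨s - i.val, by omega⟩ : Fin (s+1)) := by
            simpa using congrArg Prod.snd this
          have : j'.val = s - i.val := by rw [hj]
          exact ⟨i', by omega, hiS'⟩
        · have : j' ∉ T := fun h => hjC ((memR b' j').mpr h)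
          rcases hST i' j' hle with h | h
          · exact absurd h hiS'
          · exact absurd h this
      · subst hp'; subst hq'
        simp only [Set.mem_diff, Set.mem_singleton_iff, not_and, not_not] at hp hq
        have hq'' : (Sum.inl b', j') ∉ C := by
          intro h; have := hq h; simp at this
        have hjS : j' ∉ S := fun h => hq'' ((memL b' j').mpr h)
        by_cases hiC : (Sum.inr a', i') ∈ C
        · have := hp hiC
          have hj : i' = (⟨s - i.val, by omega⟩ : Fin (s+1)) := by
            simpa using congrArg Prod.snd this
          have : i'.val = s - i.val := by rw [hj]
          exact ⟨j', by omega, hjS⟩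
        · have : i' ∉ T := fun h => hiC ((memR a' i').mpr h)
          rcases hST j' i' (by omega) with h | h
          · exact absurd h hjS
          · exact absurd h this
    obtain ⟨j, hj, hjT⟩ := ex1
    obtain ⟨i', hi', hiS'⟩ := ex2
    have : i'.val + j.val ≤ s := by omega
    rcases hST i' j this with h | h
    · exact hiS' h
    · exact hjT h
  -- T is the image of Sᶜ under reversal
  have hrev : T = Sᶜ.image (fun j : Fin (s+1) => (⟨s - j.val, by omega⟩ : Fin (s+1))) := by
    ext j
    simp only [Finset.mem_image, Finset.mem_compl]
    constructor
    · intro hj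
      refine ⟨⟨s - j.val, by omega⟩, ?_, Fin.ext (by have := j.isLt; simp; omega)⟩
      intro hS
      have hj2 : (⟨s - ((⟨s - j.val, by omega⟩ : Fin (s+1))).val, by omega⟩ : Fin (s+1)) = j :=
        Fin.ext (by have := j.isLt; simp; omega)
      exact hone _ ⟨hS, by rw [hj2]; exact hj⟩
    · rintro ⟨i, hiS, rfl⟩
      rcases hST i ⟨s - i.val, by omega⟩ (by simp; omega) with h | h
      · exact absurd h hiS
      · exact h
  have hrevinj : Function.Injective
      (fun j : Fin (s+1) => (⟨s - j.val, by omega⟩ : Fin (s+1))) := by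
    intro a b hab
    simp only [Fin.mk.injEq] at hab
    have h1 := a.isLt
    have h2 := b.isLt
    exact Fin.ext (by omega)
  have hScard : S.card ≤ s + 1 := by
    have := S.card_le_univ
    simpa using this
  have hSTcard : S.card + T.card = s + 1 := by
    rw [hrev, Finset.card_image_of_injective _ hrevinj, Finset.card_compl]
    simp
    omega
  -- describe C as a finset
  set F : Finset ((Fin n ⊕ Fin n) × Fin (s+1)) :=
    (Finset.univ ×ˢ S).image (fun p : Fin n × Fin (s+1) => (Sum.inl p.1, p.2)) ∪
    (Finset.univ ×ˢ T).image (fun p : Fin n × Fin (s+1) => (Sum.inr p.1, p.2)) with hFdef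
  have hCF : C = ↑F := by
    ext ⟨x, i⟩
    rcases x with a | b
    · simp [hFdef, memL a i]
    · simp [hFdef, memR b i]
  have hFcard : F.card = n * S.card + n * T.card := by
    rw [hFdef, Finset.card_union_of_disjoint, Finset.card_image_of_injective,
      Finset.card_image_of_injective, Finset.card_product, Finset.card_product]
    · simp
    · intro p q h; simpa [Prod.ext_iff] using h
    · intro p q h; simpa [Prod.ext_iff] using h
    · rw [Finset.disjoint_left]
      rintro ⟨x, i⟩ h1 h2
      simp only [Finset.mem_image] at h1 h2
      obtain ⟨p, _, hp⟩ := h1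
      obtain ⟨q, _, hq⟩ := h2
      rw [← hp] at hq
      simp [Prod.ext_iff] at hq
  constructor
  · rw [hCF, Set.ncard_coe_finset, hFcard, ← Nat.mul_add, hSTcard]
  · simp [Fintype.card_prod, Fintype.card_sum, Fintype.card_fin]
    ring
end

section
/- For a connected simple graph G with at least one edge and any natural number s, the distance in J_s(G) between any two vertices (a,i) and (b,j) is at most the distance in G between a and b plus 2. -/
lemma jetGraph_lift_walk {V : Type*} (G : SimpleGraph V) (s : ℕ) {a b : V}
    (w : G.Walk a b) :
    ∃ w' : (jetGraph G s).Walk (a, (0 : Fin (s+1))) (b, (0 : Fin (s+1))),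
      w'.length = w.length := by
  induction w with
  | nil => exact ⟨.nil, rfl⟩
  | cons h p ih =>
    obtain ⟨w', hw'⟩ := ih
    exact ⟨.cons ⟨h, by simp⟩ w', congrArg (· + 1) hw'⟩

theorem jetGraph_dist_le {V : Type*} (G : SimpleGraph V) (hG : G.Connected)
    (hedge : ∃ x y : V, G.Adj x y) (s : ℕ) (a b : V) (i j : Fin (s + 1)) :
    (jetGraph G s).dist (a, i) (b, j) ≤ G.dist a b + 2 := by
  obtain ⟨x, y, hxy⟩ := hedge
  have hnb : ∀ z : V, ∃ u, G.Adj z u := by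
    intro z
    obtain ⟨w⟩ := hG.preconnected z x
    cases w with
    | nil => exact ⟨y, hxy⟩
    | cons h _ => exact ⟨_, h⟩
  have hi := i.isLt
  have hj := j.isLt
  rcases eq_or_ne a b with rfl | hab
  · obtain ⟨z, hz⟩ := hnb a
    let w : (jetGraph G s).Walk (a, i) (a, j) :=
      SimpleGraph.Walk.cons (v := (z, (0 : Fin (s+1)))) ⟨hz, by simp; omega⟩ (.cons ⟨hz.symm, by simp; omega⟩ .nil)
    have hw : w.length = 2 := rfl
    calc (jetGraph G s).dist (a, i) (a, j) ≤ w.length := SimpleGraph.dist_le w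
      _ ≤ G.dist a a + 2 := by omega
  · obtain ⟨p, hp⟩ := (hG.preconnected a b).exists_walk_length_eq_dist
    cases p with
    | nil => exact absurd rfl hab
    | cons h q =>
      obtain ⟨w', hw'⟩ := jetGraph_lift_walk G s q
      obtain ⟨z, hz⟩ := hnb b
      let w2 : (jetGraph G s).Walk (b, (0 : Fin (s+1))) (b, j) :=
        SimpleGraph.Walk.cons (v := (z, (0 : Fin (s+1)))) ⟨hz, by simp⟩
          (.cons ⟨hz.symm, by simp; omega⟩ .nil)
      have hw2 : w2.length = 2 := rfl
      have hw1 : (w'.append w2).length = w'.length + 2 := by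
        rw [SimpleGraph.Walk.length_append, hw2]
      let w : (jetGraph G s).Walk (a, i) (b, j) :=
        .cons ⟨h, by simp; omega⟩ (w'.append w2)
      have hwl : w.length = (w'.append w2).length + 1 := rfl
      have hlen : w.length = G.dist a b + 2 := by
        simp at hp
        omega
      calc (jetGraph G s).dist (a, i) (b, j) ≤ w.length := SimpleGraph.dist_le w
        _ = G.dist a b + 2 := hlen
end
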